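/- Let ε > 0, δ ∈ (0,1), and define n₁ = 1 + ⌊(1/ε)·ln((e^ε + 2δ − 1)/((e^ε + 1)δ))⌋. Define π₀ : ℕ → ℝ by π₀(0) = 0 and π₀(n+1) = min(e^ε·π₀(n) + δ, 1 − e^{−ε}·(1 − π₀(n) − δ), 1). Then for all n with 0 ≤ n ≤ n₁, π₀(n) = δ·(e^{nε} − 1)/(e^ε − 1). -/
import Mathlib


open Real

theorem pi_opt_closed_form_first_phase
    (ε δ : ℝ) (hε : 0 < ε) (hδ0 : 0 < δ) (hδ1 : δ < 1)
    (π₀ : ℕ → ℝ) (h0 : π₀ 0 = 0)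
    (hrec : ∀ n, π₀ (n + 1) =
      min (min (exp ε * π₀ n + δ) (1 - exp (-ε) * (1 - π₀ n - δ))) 1)
    (n₁ : ℕ)
    (hn₁ : (n₁ : ℤ) = 1 + ⌊(1 / ε) * Real.log ((exp ε + 2 * δ - 1) / ((exp ε + 1) * δ))⌋) :
    ∀ n : ℕ, n ≤ n₁ → π₀ n = δ * (exp (n * ε) - 1) / (exp ε - 1) := by
  have hEpos : (0:ℝ) < exp ε := exp_pos ε
  have hE1 : 1 < exp ε := by
    calc (1:ℝ) = exp 0 := by simp
    _ < exp ε := exp_lt_exp.mpr hε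
  have hE1' : 0 < exp ε - 1 := by linarith
  have hApos : 0 < (exp ε + 2 * δ - 1) / ((exp ε + 1) * δ) := by
    apply div_pos <;> nlinarith
  intro n
  induction n with
  | zero => intro _; simp [h0]
  | succ n ih =>
    intro hn1
    have hp := ih (Nat.le_of_succ_le hn1)
    have hfloor : (n : ℤ) ≤ ⌊(1 / ε) * Real.log ((exp ε + 2 * δ - 1) / ((exp ε + 1) * δ))⌋ := by
      have : ((n:ℤ) + 1) ≤ (n₁ : ℤ) := by exact_mod_cast hn1
      omega
    have hle : (n : ℝ) ≤ (1 / ε) * Real.log ((exp ε + 2 * δ - 1) / ((exp ε + 1) * δ)) := by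
      exact_mod_cast Int.le_floor.mp hfloor
    have hle2 : (n : ℝ) * ε ≤ Real.log ((exp ε + 2 * δ - 1) / ((exp ε + 1) * δ)) := by
      rw [one_div] at hle
      calc (n:ℝ) * ε ≤ (ε⁻¹ * Real.log ((exp ε + 2 * δ - 1) / ((exp ε + 1) * δ))) * ε :=
        mul_le_mul_of_nonneg_right hle (le_of_lt hε)
      _ = Real.log ((exp ε + 2 * δ - 1) / ((exp ε + 1) * δ)) := by
        field_simp
    have hexpA : exp ((n:ℝ) * ε) ≤ (exp ε + 2 * δ - 1) / ((exp ε + 1) * δ) := by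
      calc exp ((n:ℝ) * ε) ≤ exp (Real.log ((exp ε + 2 * δ - 1) / ((exp ε + 1) * δ))) :=
        exp_le_exp.mpr hle2
      _ = _ := exp_log hApos
    have hA : (exp ε + 1) * δ * exp ((n:ℝ) * ε) ≤ exp ε + 2 * δ - 1 := by
      have h := (le_div_iff₀ (by positivity : (0:ℝ) < (exp ε + 1) * δ)).mp hexpA
      linarith
    have hexn1 : (1:ℝ) ≤ exp ((n:ℝ) * ε) := by
      rw [show (1:ℝ) = exp 0 by simp]; exact exp_le_exp.mpr (by positivity)
    -- key bound: p * (E+1) ≤ 1 - δ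
    have hpbound : π₀ n * (exp ε + 1) ≤ 1 - δ := by
      rw [hp, div_mul_eq_mul_div, div_le_iff₀ hE1']
      nlinarith [hA]
    have hppos : 0 ≤ π₀ n := by
      rw [hp]
      apply div_nonneg _ hE1'.le
      nlinarith [hexn1]
    have hEinv : exp (-ε) = (exp ε)⁻¹ := exp_neg ε
    -- branch 1 ≤ branch 2
    have hb12 : exp ε * π₀ n + δ ≤ 1 - exp (-ε) * (1 - π₀ n - δ) := by
      rw [hEinv, ← sub_nonneg]
      have key : π₀ n * (exp ε ^ 2 - 1) ≤ (1 - δ) * (exp ε - 1) := by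
        nlinarith [hpbound]
      have h2 : 1 - (exp ε)⁻¹ * (1 - π₀ n - δ) - (exp ε * π₀ n + δ)
          = (exp ε)⁻¹ * ((1 - δ) * (exp ε - 1) - π₀ n * (exp ε ^ 2 - 1)) := by
        field_simp; ring
      rw [h2]
      have : 0 ≤ (1 - δ) * (exp ε - 1) - π₀ n * (exp ε ^ 2 - 1) := by linarith
      positivity
    -- branch 1 ≤ 1
    have hb1le1 : exp ε * π₀ n + δ ≤ 1 := by nlinarith [hpbound, hppos]
    rw [hrec n, min_eq_left hb12, min_eq_left hb1le1, hp]
    have hexp : exp (((n:ℕ)+1 : ℕ) * ε) = exp ((n:ℝ) * ε) * exp ε := by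
      rw [← exp_add]
      push_cast
      ring_nf
    push_cast
    rw [show ((n:ℝ) + 1) * ε = (n:ℝ) * ε + ε by ring, exp_add]
    field_simp
    ring
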